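/- In misère Partizan Kayles, if the total number of squares in a position G is congruent to 2 modulo 3, then Left moving first loses G, so o⁻(G) ∈ {R, P}. -/
import Mathlib


/-- Add a strip of length `k` to a position (strips of length 0 are discarded). -/
def addStrip (m : Multiset ℕ) (k : ℕ) : Multiset ℕ := if k = 0 then m else k ::ₘ m

/-- Left removes one square from a strip of length `n ≥ 1`, leaving strips `i` and `n-1-i`. -/
def LeftMove (G G' : Multiset ℕ) : Prop :=
  ∃ n ∈ G, ∃ i, i + 1 ≤ n ∧ G' = addStrip (addStrip (G.erase n) i) (n - 1 - i)

/-- Right removes two adjacent squares from a strip of length `n ≥ 2`, leaving `i` and `n-2-i`. -/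
def RightMove (G G' : Multiset ℕ) : Prop :=
  ∃ n ∈ G, ∃ i, i + 2 ≤ n ∧ G' = addStrip (addStrip (G.erase n) i) (n - 2 - i)

mutual
  /-- Misère play: Left, to move, wins (a player unable to move wins). -/
  inductive LeftWinsMover : Multiset ℕ → Prop
    | cannot (G : Multiset ℕ) : (¬ ∃ G', LeftMove G G') → LeftWinsMover G
    | move (G G' : Multiset ℕ) : LeftMove G G' → LeftWinsWaiter G' → LeftWinsMover G
  /-- Misère play: Left wins with Right to move. -/
  inductive LeftWinsWaiter : Multiset ℕ → Prop
    | intro (G : Multiset ℕ) : (∃ G', RightMove G G') →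
        (∀ G', RightMove G G' → LeftWinsMover G') → LeftWinsWaiter G
end

inductive Outcome | L | N | P | R
  deriving DecidableEq

open Classical in
/-- The misère outcome `o⁻(G)`. -/
noncomputable def outcome (G : Multiset ℕ) : Outcome :=
  if LeftWinsMover G then (if LeftWinsWaiter G then Outcome.L else Outcome.N)
  else (if LeftWinsWaiter G then Outcome.P else Outcome.R)

/-- The partial order on outcomes: `L` greatest, `R` least, `N` and `P` incomparable. -/
def Outcome.le (a b : Outcome) : Prop := a = b ∨ a = Outcome.R ∨ b = Outcome.L

/-- `pos k j` is the position `kS₁ + jS₂`. -/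
def pos (k j : ℕ) : Multiset ℕ := Multiset.replicate k 1 + Multiset.replicate j 2


lemma addStrip_sum (m : Multiset ℕ) (k : ℕ) : (addStrip m k).sum = m.sum + k := by
  unfold addStrip; split <;> simp_all [Multiset.sum_cons, Nat.add_comm]

lemma addStrip_zero_notmem {m : Multiset ℕ} (h : 0 ∉ m) (k : ℕ) : 0 ∉ addStrip m k := by
  unfold addStrip; split
  · exact h
  · intro hm
    rcases Multiset.mem_cons.1 hm with h1 | h1
    · omega
    · exact h h1

lemma erase_sum {G : Multiset ℕ} {n : ℕ} (hn : n ∈ G) :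
    (G.erase n).sum + n = G.sum := by
  conv_rhs => rw [← Multiset.cons_erase hn]
  simp [Multiset.sum_cons]; ring

lemma erase_zero_notmem {G : Multiset ℕ} (h : 0 ∉ G) (n : ℕ) : 0 ∉ G.erase n :=
  fun hm => h (Multiset.mem_of_mem_erase hm)

lemma leftMove_sum {G G' : Multiset ℕ} (h : LeftMove G G') : G'.sum + 1 = G.sum := by
  obtain ⟨n, hn, i, hi, rfl⟩ := h
  have := erase_sum hn
  rw [addStrip_sum, addStrip_sum]
  omega

lemma rightMove_sum {G G' : Multiset ℕ} (h : RightMove G G') : G'.sum + 2 = G.sum := by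
  obtain ⟨n, hn, i, hi, rfl⟩ := h
  have := erase_sum hn
  rw [addStrip_sum, addStrip_sum]
  omega

lemma leftMove_notmem {G G' : Multiset ℕ} (h0 : 0 ∉ G) (h : LeftMove G G') : 0 ∉ G' := by
  obtain ⟨n, hn, i, hi, rfl⟩ := h
  exact addStrip_zero_notmem (addStrip_zero_notmem (erase_zero_notmem h0 n) i) _

lemma rightMove_notmem {G G' : Multiset ℕ} (h0 : 0 ∉ G) (h : RightMove G G') : 0 ∉ G' := by
  obtain ⟨n, hn, i, hi, rfl⟩ := h
  exact addStrip_zero_notmem (addStrip_zero_notmem (erase_zero_notmem h0 n) i) _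

lemma exists_leftMove {G : Multiset ℕ} (h0 : 0 ∉ G) (hne : G ≠ 0) :
    ∃ G', LeftMove G G' := by
  obtain ⟨n, hn⟩ := Multiset.exists_mem_of_ne_zero hne
  have hn1 : 1 ≤ n := by
    rcases Nat.eq_zero_or_pos n with h | h
    · exact absurd (h ▸ hn) h0
    · exact h
  exact ⟨_, n, hn, 0, by omega, rfl⟩

lemma main_lemma : ∀ s G, Multiset.sum G = s → 0 ∉ G → s % 3 = 2 → ¬ LeftWinsMover G := by
  intro s
  induction s using Nat.strong_induction_on with
  | _ s ih =>
    intro G hsum h0 hmod hLW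
    cases hLW with
    | cannot G hno =>
      apply hno
      apply exists_leftMove h0
      intro hG0
      rw [hG0] at hsum
      simp at hsum
      omega
    | move G G' hmv hW =>
      cases hW with
      | intro G' hex hall =>
        obtain ⟨G'', hR⟩ := hex
        have h1 := leftMove_sum hmv
        have h2 := rightMove_sum hR
        have h0' := rightMove_notmem (leftMove_notmem h0 hmv) hR
        exact ih G''.sum (by omega) G'' rfl h0' (by omega) (hall G'' hR)

theorem kayles_sum_two_mod_three (G : Multiset ℕ) (hG : 0 ∉ G)
    (h : G.sum % 3 = 2) :
    ¬ LeftWinsMover G ∧ (outcome G = Outcome.R ∨ outcome G = Outcome.P) := by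
  have hm := main_lemma G.sum G rfl hG h
  refine ⟨hm, ?_⟩
  unfold outcome
  rw [if_neg hm]
  split <;> simp
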